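/- Let W = (W_1,...,W_p) = w([X, X̃], y) be knockoff statistics satisfying the flip-sign property: for every S ⊆ {1,...,p}, w_j([X, X̃]_{swap(S)}, y) = -w_j([X, X̃], y) if j ∈ S and = w_j([X, X̃], y) otherwise. Suppose ([X,X̃]_{swap(S)}, y) =_d ([X,X̃], y) for every S ⊆ H_0. Let ε = (ε_1,...,ε_p) be independent random signs, independent of everything, with ε_j uniform on {±1} for j ∈ H_0 and ε_j = +1 for j ∉ H_0. Then ε ⊙ W =_d W (coordinatewise multiplication). In particular, conditional on |W|, the signs of the null statistics {W_j : j ∈ H_0} are i.i.d. uniform on {±1}. -/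

import Mathlib

open MeasureTheory ProbabilityTheory

/-- The swap operation: exchange the coordinate `inl j` (original) with `inr j` (knockoff)
for each `j ∈ S`. -/
def knockoffSwap {p : ℕ} (S : Finset (Fin p)) (v : (Fin p ⊕ Fin p) → ℝ) :
    (Fin p ⊕ Fin p) → ℝ :=
  Sum.elim (fun j => if j ∈ S then v (Sum.inr j) else v (Sum.inl j))
    (fun j => if j ∈ S then v (Sum.inl j) else v (Sum.inr j))

lemma measurable_knockoffSwap {p : ℕ} (S : Finset (Fin p)) :
    Measurable (knockoffSwap S) := by
  unfold knockoffSwap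
  apply measurable_pi_lambda
  rintro (j | j) <;> dsimp <;> split <;> exact measurable_pi_apply _

/-- Sign-flip property of knockoff statistics: if `W = w([X, X̃], y)` obeys the flip-sign
property, the data obeys null-swap exchangeability, and `ε` is a vector of independent random
signs (uniform `±1` on nulls, `+1` off nulls) independent of the data, then `ε ⊙ W =_d W`. -/
theorem knockoff_statistics_sign_flip
    {Ω : Type*} [MeasurableSpace Ω] {μ : Measure Ω} [IsProbabilityMeasure μ]
    {p n : ℕ} (D : Ω → Fin n → (Fin p ⊕ Fin p) → ℝ) (y : Ω → Fin n → ℝ)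
    (hD : Measurable D) (hy : Measurable y)
    (w : (Fin n → (Fin p ⊕ Fin p) → ℝ) → (Fin n → ℝ) → Fin p → ℝ) (hw : Measurable ↿w)
    (hflip : ∀ (S : Finset (Fin p)) (M : Fin n → (Fin p ⊕ Fin p) → ℝ) (yv : Fin n → ℝ)
      (j : Fin p), w (fun i => knockoffSwap S (M i)) yv j
        = if j ∈ S then -(w M yv j) else w M yv j)
    (H₀ : Finset (Fin p))
    (hexch : ∀ S : Finset (Fin p), S ⊆ H₀ →
      μ.map (fun ω => (fun i => knockoffSwap S (D ω i), y ω))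
        = μ.map (fun ω => (D ω, y ω)))
    (ε : Ω → Fin p → ℝ) (hε : Measurable ε)
    (hεindep : IndepFun ε (fun ω => (D ω, y ω)) μ)
    (hεiid : iIndepFun (fun j ω => ε ω j) μ)
    (hεnull : ∀ j ∈ H₀, μ {ω | ε ω j = 1} = 1/2 ∧ μ {ω | ε ω j = -1} = 1/2)
    (hεnonnull : ∀ j ∉ H₀, ∀ ω, ε ω j = 1) :
    μ.map (fun ω => fun j => ε ω j * w (D ω) (y ω) j)
      = μ.map (fun ω => w (D ω) (y ω)) := by
  classical
  set W : Ω → Fin p → ℝ := fun ω => w (D ω) (y ω) with hWdef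
  have hpair : Measurable (fun ω => (D ω, y ω)) := hD.prodMk hy
  have huw : Measurable (fun q : (Fin n → (Fin p ⊕ Fin p) → ℝ) × (Fin n → ℝ) =>
      w q.1 q.2) := by
    refine measurable_pi_lambda _ fun j => ?_
    exact hw.comp (measurable_fst.prodMk (measurable_snd.prodMk measurable_const))
  have hW : Measurable W := huw.comp hpair
  have hεj : ∀ j : Fin p, Measurable (fun ω => ε ω j) :=
    fun j => (measurable_pi_apply j).comp hε
  set f : Ω → Fin p → ℝ := fun ω => fun j => ε ω j * W ω j with hfdef
  have hf : Measurable f :=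
    measurable_pi_lambda _ fun j => (hεj j).mul ((measurable_pi_apply j).comp hW)
  -- sign vectors and their preimage events
  set c : Finset (Fin p) → Fin p → ℝ := fun S j => if j ∈ S then -1 else 1 with hc
  set T : Finset (Fin p) → Set (Fin p → ℝ) :=
    fun S => ⋂ j ∈ H₀, (fun v : Fin p → ℝ => v j) ⁻¹' {c S j} with hT
  have hTmeas : ∀ S, MeasurableSet (T S) := fun S =>
    MeasurableSet.biInter (H₀ : Set (Fin p)).to_countable
      (fun j _ => (measurable_pi_apply j) (measurableSet_singleton _))
  set A : Finset (Fin p) → Set Ω := fun S => ε ⁻¹' T S with hA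
  have hAmeas : ∀ S, MeasurableSet (A S) := fun S => hε (hTmeas S)
  have hAmem : ∀ S ω, ω ∈ A S ↔ ∀ j ∈ H₀, ε ω j = c S j := by
    intro S ω
    simp [hA, hT, Set.mem_iInter]
  -- the events are pairwise disjoint over subsets of H₀
  have hdisj : (↑H₀.powerset : Set (Finset (Fin p))).PairwiseDisjoint A := by
    intro S hS S' hS' hne
    simp only [Finset.coe_powerset, Set.mem_preimage, Set.mem_powerset_iff,
      Finset.coe_subset] at hS hS'
    refine Set.disjoint_left.2 fun ω hω hω' => ?_
    rw [hAmem] at hω hω'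
    obtain ⟨j, hj⟩ : ∃ j, (j ∈ S ∧ j ∉ S') ∨ (j ∈ S' ∧ j ∉ S) := by
      by_contra h
      push_neg at h
      exact hne (Finset.ext fun j => ⟨(h j).1, (h j).2⟩)
    rcases hj with ⟨h1, h2⟩ | ⟨h1, h2⟩
    · have e1 := hω j (hS h1)
      have e2 := hω' j (hS h1)
      rw [hc] at e1 e2
      simp [h1, h2] at e1 e2
      rw [e1] at e2; norm_num at e2
    · have e1 := hω j (hS' h1)
      have e2 := hω' j (hS' h1)
      rw [hc] at e1 e2
      simp [h1, h2] at e1 e2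
      rw [e2] at e1; norm_num at e1
  -- the union of the events has full measure
  set U : Set Ω := ⋃ S ∈ H₀.powerset, A S with hU
  have hUmeas : MeasurableSet U :=
    MeasurableSet.biUnion (H₀.powerset : Finset (Finset (Fin p))).countable_toSet
      fun S _ => hAmeas S
  have hUc : μ Uᶜ = 0 := by
    have hsub : Uᶜ ⊆ ⋃ j ∈ H₀, {ω | ε ω j ≠ 1 ∧ ε ω j ≠ -1} := by
      intro ω hω
      by_contra h
      simp only [Set.mem_iUnion, Set.mem_setOf_eq, not_exists, not_and] at h
      push_neg at h
      have hall : ∀ j ∈ H₀, ε ω j = 1 ∨ ε ω j = -1 := by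
        intro j hj
        by_cases h1 : ε ω j = 1
        · exact Or.inl h1
        · exact Or.inr (h j hj h1)
      apply hω
      rw [hU]
      refine Set.mem_biUnion (Finset.mem_powerset.2 (Finset.filter_subset
        (fun j => ε ω j = -1) H₀)) ?_
      rw [hAmem]
      intro j hj
      rw [hc]
      by_cases hm : j ∈ H₀.filter (fun j => ε ω j = -1)
      · simp only [hm, if_true]
        exact (Finset.mem_filter.1 hm).2
      · simp only [hm, if_false]
        rcases hall j hj with h1 | h1
        · exact h1
        · exact absurd (Finset.mem_filter.2 ⟨hj, h1⟩) hm
    refine measure_mono_null hsub (measure_biUnion_null_iff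
      (H₀ : Set (Fin p)).to_countable |>.2 fun j hj => ?_)
    have hj' : j ∈ H₀ := hj
    obtain ⟨h1, h2⟩ := hεnull j hj'
    have hdis : Disjoint {ω | ε ω j = 1} {ω | ε ω j = -1} := by
      refine Set.disjoint_left.2 fun ω hω hω' => ?_
      simp only [Set.mem_setOf_eq] at hω hω'
      rw [hω] at hω'; norm_num at hω'
    have hm1 : MeasurableSet {ω | ε ω j = 1} := hεj j (measurableSet_singleton 1)
    have hm2 : MeasurableSet {ω | ε ω j = -1} := hεj j (measurableSet_singleton (-1))
    have hunion : μ ({ω | ε ω j = 1} ∪ {ω | ε ω j = -1}) = 1 := by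
      rw [measure_union hdis hm2, h1, h2]
      rw [one_div]
      exact ENNReal.inv_two_add_inv_two
    have heq : {ω | ε ω j ≠ 1 ∧ ε ω j ≠ -1} = ({ω | ε ω j = 1} ∪ {ω | ε ω j = -1})ᶜ := by
      ext ω; simp [not_or]
    rw [heq, measure_compl (hm1.union hm2) (measure_ne_top μ _), hunion,
      measure_univ, tsub_self]
  have hUfull : μ U = 1 := (prob_compl_eq_zero_iff hUmeas).1 hUc
  -- for each S ⊆ H₀, the "flipped" statistic as a function of the data
  set g : Finset (Fin p) → (Fin n → (Fin p ⊕ Fin p) → ℝ) × (Fin n → ℝ) → Fin p → ℝ :=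
    fun S q => w (fun i => knockoffSwap S (q.1 i)) q.2 with hg
  have hgmeas : ∀ S, Measurable (g S) := by
    intro S
    have hTS : Measurable (fun q : (Fin n → (Fin p ⊕ Fin p) → ℝ) × (Fin n → ℝ) =>
        ((fun i => knockoffSwap S (q.1 i), q.2) :
          (Fin n → (Fin p ⊕ Fin p) → ℝ) × (Fin n → ℝ))) := by
      refine Measurable.prodMk ?_ measurable_snd
      exact measurable_pi_lambda _ fun i =>
        (measurable_knockoffSwap S).comp ((measurable_pi_apply i).comp measurable_fst)
    exact huw.comp hTS
  -- main computation
  ext B hB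
  rw [Measure.map_apply hf hB, Measure.map_apply hW hB]
  -- key fact: for each S ⊆ H₀, the distribution of g S ∘ (D, y) equals that of W
  have hkey : ∀ S : Finset (Fin p), S ∈ H₀.powerset →
      μ ((fun ω => g S (D ω, y ω)) ⁻¹' B) = μ (W ⁻¹' B) := by
    intro S hS
    have hSsub : S ⊆ H₀ := Finset.mem_powerset.1 hS
    have hmap : Measurable (fun ω => ((fun i => knockoffSwap S (D ω i), y ω) :
        (Fin n → (Fin p ⊕ Fin p) → ℝ) × (Fin n → ℝ))) := by
      refine Measurable.prodMk ?_ hy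
      exact measurable_pi_lambda _ fun i =>
        (measurable_knockoffSwap S).comp ((measurable_pi_apply i).comp hD)
    have h1 : ((fun ω => g S (D ω, y ω)) ⁻¹' B) =
        (fun ω => ((fun i => knockoffSwap S (D ω i), y ω) :
          (Fin n → (Fin p ⊕ Fin p) → ℝ) × (Fin n → ℝ))) ⁻¹'
          ((fun q : (Fin n → (Fin p ⊕ Fin p) → ℝ) × (Fin n → ℝ) => w q.1 q.2) ⁻¹' B) := rfl
    have h2 : (W ⁻¹' B) = (fun ω => (D ω, y ω)) ⁻¹'
        ((fun q : (Fin n → (Fin p ⊕ Fin p) → ℝ) × (Fin n → ℝ) => w q.1 q.2) ⁻¹' B) := rfl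
    rw [h1, h2, ← Measure.map_apply hmap (huw hB), ← Measure.map_apply hpair (huw hB),
      hexch S hSsub]
  -- on A S, the sign-flipped statistic agrees with g S ∘ (D, y)
  have hon : ∀ S : Finset (Fin p), S ∈ H₀.powerset → ∀ ω ∈ A S,
      f ω = g S (D ω, y ω) := by
    intro S hS ω hω
    have hSsub : S ⊆ H₀ := Finset.mem_powerset.1 hS
    rw [hAmem] at hω
    funext j
    have hgj : g S (D ω, y ω) j = if j ∈ S then -(W ω j) else W ω j := hflip S (D ω) (y ω) j
    rw [hgj]
    show ε ω j * W ω j = _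
    by_cases hjS : j ∈ S
    · have hjH : j ∈ H₀ := hSsub hjS
      have := hω j hjH
      rw [hc] at this
      simp only [hjS, if_true] at this ⊢
      rw [this]; ring
    · simp only [hjS, if_false]
      by_cases hjH : j ∈ H₀
      · have := hω j hjH
        rw [hc] at this
        simp only [hjS, if_false] at this
        rw [this, one_mul]
      · rw [hεnonnull j hjH ω, one_mul]
  -- decompose by the events A S
  have hdecomp : μ (f ⁻¹' B) = ∑ S ∈ H₀.powerset, μ (f ⁻¹' B ∩ A S) := by
    have h1 : μ (f ⁻¹' B) = μ (f ⁻¹' B ∩ U) := by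
      have : μ (f ⁻¹' B ∩ Uᶜ) = 0 := measure_mono_null Set.inter_subset_right hUc
      rw [← measure_inter_add_diff (f ⁻¹' B) hUmeas]
      rw [show f ⁻¹' B \ U = f ⁻¹' B ∩ Uᶜ from rfl, this, add_zero]
    rw [h1]
    have h2 : f ⁻¹' B ∩ U = ⋃ S ∈ H₀.powerset, (f ⁻¹' B ∩ A S) := by
      rw [hU, Set.inter_iUnion₂]
    rw [h2]
    rw [measure_biUnion_finset ?_ fun S _ => (hf hB).inter (hAmeas S)]
    intro S hS S' hS' hne
    exact Disjoint.mono Set.inter_subset_right Set.inter_subset_right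
      (hdisj (by simpa using hS) (by simpa using hS') hne)
  rw [hdecomp]
  -- compute each term via independence
  have hterm : ∀ S ∈ H₀.powerset, μ (f ⁻¹' B ∩ A S) = μ (A S) * μ (W ⁻¹' B) := by
    intro S hS
    have hinter : f ⁻¹' B ∩ A S = ((fun ω => (D ω, y ω)) ⁻¹' (g S ⁻¹' B)) ∩ A S := by
      ext ω
      constructor
      · rintro ⟨h1, h2⟩
        exact ⟨by rw [Set.mem_preimage, Set.mem_preimage, ← hon S hS ω h2]; exact h1, h2⟩
      · rintro ⟨h1, h2⟩
        exact ⟨by rw [Set.mem_preimage, hon S hS ω h2]; exact h1, h2⟩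
    rw [hinter, Set.inter_comm]
    have := (indepFun_iff_measure_inter_preimage_eq_mul.1 hεindep)
      (T S) (g S ⁻¹' B) (hTmeas S) ((hgmeas S) hB)
    rw [hA]
    rw [this]
    congr 1
    exact hkey S hS
  rw [Finset.sum_congr rfl hterm, ← Finset.sum_mul]
  have hsum : ∑ S ∈ H₀.powerset, μ (A S) = 1 := by
    rw [← hUfull, hU, measure_biUnion_finset
      (by intro S hS S' hS' hne; exact hdisj (by simpa using hS) (by simpa using hS') hne)
      (fun S _ => hAmeas S)]
  rw [hsum, one_mul]
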